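/- arXiv:2310.19335 — 4 statements merged into one kernel-verified Lean document; each statement's English description precedes it below -/
import Mathlib

section
/- If s₁, ..., sₘ are distinct square-free positive integers, then the real numbers √s₁, ..., √sₘ are linearly independent over the rationals: if c₁, ..., cₘ ∈ ℚ satisfy ∑ᵢ cᵢ√sᵢ = 0, then all cᵢ = 0. -/
/-!
Let `K_Q = ℚ(√p : p ∈ Q)` for a finite set `Q` of primes. By induction on `Q`, `√n ∉ K_Q` as soon
as some prime `r ∉ Q` divides `n` to an odd power: every element of `K_Q(√q)` is `a + b√q` with
`a, b ∈ K_Q`, and if `√n = a + b√q` then `√n ∈ K_Q` (when `b = 0`), `√q ∈ K_Q` (when `ab ≠ 0`,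
by squaring) or `√(nq) = bq ∈ K_Q` (when `a = 0`), each excluded by induction. A relation `∑ cᵢ √sᵢ = 0` whose `sᵢ` have
their prime factors in `Q ∪ {p}`, `p ∉ Q`, splits according to `p ∣ sᵢ` into `A + B√p = 0` with
`A, B ∈ K_Q`; as `√p ∉ K_Q`, `A = B = 0`, two relations involving only the primes of `Q`.
-/

open Real

noncomputable def sqrtField (Q : Finset ℕ) : Subfield ℝ :=
  Subfield.closure ((fun p : ℕ => √(p : ℝ)) '' Q)

namespace Subfield

variable {F : Type*} [Field F] {K : Subfield F} {t : F}

variable (K) in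
/-- `K + K t`, a subfield when `t * t ∈ K`: `(a + b t)⁻¹ = (a - b t) / (a² - b² t²)`, and if the
denominator vanishes then `a + b t` is `0` or `2a`. -/
def adjoinSqrt (ht : t * t ∈ K) : Subfield F where
  carrier := {x | ∃ a ∈ K, ∃ b ∈ K, x = a + b * t}
  zero_mem' := ⟨0, zero_mem _, 0, zero_mem _, by ring⟩
  one_mem' := ⟨1, one_mem _, 0, zero_mem _, by ring⟩
  add_mem' := by
    rintro _ _ ⟨a, ha, b, hb, rfl⟩ ⟨c, hc, d, hd, rfl⟩
    exact ⟨a + c, add_mem ha hc, b + d, add_mem hb hd, by ring⟩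
  neg_mem' := by
    rintro _ ⟨a, ha, b, hb, rfl⟩
    exact ⟨-a, neg_mem ha, -b, neg_mem hb, by ring⟩
  mul_mem' := by
    rintro _ _ ⟨a, ha, b, hb, rfl⟩ ⟨c, hc, d, hd, rfl⟩
    exact ⟨a * c + b * d * (t * t), add_mem (mul_mem ha hc) (mul_mem (mul_mem hb hd) ht),
      a * d + b * c, add_mem (mul_mem ha hd) (mul_mem hb hc), by ring⟩
  inv_mem' := by
    rintro _ ⟨a, ha, b, hb, rfl⟩
    set N := a * a - b * b * (t * t)
    have hN : N ∈ K := sub_mem (mul_mem ha ha) (mul_mem (mul_mem hb hb) ht)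
    have hconj : (a + b * t) * (a - b * t) = N := by ring
    by_cases hN0 : N = 0
    · rcases mul_eq_zero.1 (hconj.trans hN0) with h | h
      · exact ⟨0, zero_mem _, 0, zero_mem _, by simp [h]⟩
      · refine ⟨(a + a)⁻¹, inv_mem (add_mem ha ha), 0, zero_mem _, ?_⟩
        rw [show b * t = a by linear_combination -h]
        ring
    · refine ⟨a / N, div_mem ha hN, -b / N, div_mem (neg_mem hb) hN, ?_⟩
      refine inv_eq_of_mul_eq_one_right ?_
      field_simp
      linear_combination hconj

theorem mem_of_add_mul_mem {a b : F} (ha : a ∈ K) (hb : b ∈ K) (hb0 : b ≠ 0)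
    (h : a + b * t ∈ K) : t ∈ K := by
  simpa [hb0] using div_mem (sub_mem h ha) hb

theorem eq_zero_of_add_mul_eq_zero {a b : F} (ha : a ∈ K) (hb : b ∈ K) (ht : t ∉ K)
    (h : a + b * t = 0) : a = 0 ∧ b = 0 := by
  have hb0 : b = 0 := by
    by_contra hb0
    exact ht (mem_of_add_mul_mem ha hb hb0 (h ▸ zero_mem K))
  simpa [hb0] using h

end Subfield

theorem sqrtField_insert_le (Q : Finset ℕ) (q : ℕ) :
    sqrtField (insert q Q) ≤ (sqrtField Q).adjoinSqrt
      (t := √(q : ℝ)) (by rw [mul_self_sqrt q.cast_nonneg]; exact natCast_mem _ q) := by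
  refine Subfield.closure_le.2 ?_
  rintro _ ⟨p, hp, rfl⟩
  rcases Finset.mem_insert.1 hp with rfl | hp
  · exact ⟨0, zero_mem _, 1, one_mem _, by ring⟩
  · exact ⟨√p, Subfield.subset_closure ⟨p, hp, rfl⟩, 0, zero_mem _, by ring⟩

theorem sqrt_mem_sqrtField {Q : Finset ℕ} {n : ℕ} (hn : n.primeFactors ⊆ Q) :
    √(n : ℝ) ∈ sqrtField Q := by
  induction n using induction_on_primes with
  | zero => simp
  | one => simp
  | prime_mul p a hp ih =>
    rcases eq_or_ne a 0 with rfl | ha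
    · simp
    have hpa : p * a ≠ 0 := mul_ne_zero hp.ne_zero ha
    rw [Nat.cast_mul, sqrt_mul p.cast_nonneg]
    refine mul_mem (Subfield.subset_closure ⟨p, hn ?_, rfl⟩)
      (ih ((Nat.primeFactors_mono (dvd_mul_left a p) hpa).trans hn))
    exact Nat.mem_primeFactors.2 ⟨hp, dvd_mul_right p a, hpa⟩

theorem sqrt_notMem_sqrtField {Q : Finset ℕ} (hQ : ∀ p ∈ Q, p.Prime) {n r : ℕ} (hrQ : r ∉ Q)
    (hr : Odd (n.factorization r)) : √(n : ℝ) ∉ sqrtField Q := by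
  induction Q using Finset.induction_on generalizing n r with
  | empty =>
    intro hn
    rw [sqrtField, Finset.coe_empty, Set.image_empty, Subfield.closure_empty] at hn
    obtain ⟨x, hx⟩ : √(n : ℝ) ∈ (Rat.castHom ℝ).fieldRange :=
      bot_le (a := (Rat.castHom ℝ).fieldRange) hn
    obtain ⟨k, rfl⟩ : IsSquare n := by
      by_contra h
      exact irrational_sqrt_natCast_iff.2 h ⟨x, hx⟩
    rw [← sq, Nat.factorization_pow] at hr
    exact Nat.not_odd_iff_even.2 (even_two_mul _) hr
  | insert q Q hqQ ih =>
    have hq : q.Prime := hQ q (Finset.mem_insert_self q Q)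
    have hQ' : ∀ p ∈ Q, p.Prime := fun p hp => hQ p (Finset.mem_insert_of_mem hp)
    have hrQ' : r ∉ Q := fun h => hrQ (Finset.mem_insert_of_mem h)
    have hrq : r ≠ q := fun h => hrQ (h ▸ Finset.mem_insert_self r Q)
    have hn0 : n ≠ 0 := by rintro rfl; simp at hr
    have hqK : √(q : ℝ) ∉ sqrtField Q := ih hQ' hqQ (by simp [hq.factorization_self])
    intro hn
    obtain ⟨a, ha, b, hb, hab⟩ := sqrtField_insert_le Q q hn
    have hb0 : b ≠ 0 := by
      rintro rfl
      exact ih hQ' hrQ' hr (by simpa [hab] using ha)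
    have ha0 : a = 0 := by
      by_contra ha0
      have hsq : (a * a + b * b * q) + (2 * a * b) * √(q : ℝ) = n := by
        rw [← mul_self_sqrt n.cast_nonneg, hab]
        linear_combination (-b * b) * mul_self_sqrt q.cast_nonneg
      refine hqK (Subfield.mem_of_add_mul_mem ?_ ?_ (by simp [ha0, hb0]) (hsq ▸ natCast_mem _ n))
      · exact add_mem (mul_mem ha ha) (mul_mem (mul_mem hb hb) (natCast_mem _ q))
      · exact mul_mem (mul_mem (ofNat_mem _ 2) ha) hb
    refine ih hQ' hrQ' (n := n * q) ?_ ?_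
    · simpa [Nat.factorization_mul hn0 hq.ne_zero, hq.factorization, hrq] using hr
    · rw [Nat.cast_mul, sqrt_mul n.cast_nonneg, hab, ha0, zero_add, mul_assoc,
        mul_self_sqrt q.cast_nonneg]
      exact mul_mem hb (natCast_mem _ q)

theorem Nat.primeFactors_div_of_squarefree {n p : ℕ} (hn : Squarefree n) (hp : p.Prime)
    (hpn : p ∣ n) : (n / p).primeFactors = n.primeFactors.erase p := by
  conv_lhs => rw [← Nat.gcd_eq_right hpn]
  rw [Nat.primeFactors_div_gcd hn hp.ne_zero, hp.primeFactors, Finset.sdiff_singleton_eq_erase]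

theorem sum_mul_sqrt_eq_add_mul_sqrt {ι : Type*} (D : Finset ι) (v : ι → ℕ) (c : ι → ℝ)
    (p : ℕ) : ∑ i ∈ D, c i * √(v i : ℝ) =
      ∑ i ∈ D with ¬ p ∣ v i, c i * √(v i : ℝ) +
        (∑ i ∈ D with p ∣ v i, c i * √((v i / p : ℕ) : ℝ)) * √(p : ℝ) := by
  rw [← Finset.sum_filter_not_add_sum_filter D (fun i => p ∣ v i), Finset.sum_mul]
  congr 1
  refine Finset.sum_congr rfl fun i hi => ?_
  rw [mul_assoc, ← sqrt_mul (Nat.cast_nonneg _), ← Nat.cast_mul,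
    Nat.div_mul_cancel (Finset.mem_filter.1 hi).2]

theorem eq_zero_of_sum_mul_sqrt_eq_zero {ι : Type*} {Q : Finset ℕ} (hQ : ∀ p ∈ Q, p.Prime)
    {D : Finset ι} {v : ι → ℕ} (hv : Set.InjOn v D) (hsf : ∀ i ∈ D, Squarefree (v i))
    (hvQ : ∀ i ∈ D, (v i).primeFactors ⊆ Q) {c : ι → ℚ}
    (h : ∑ i ∈ D, (c i : ℝ) * √(v i : ℝ) = 0) : ∀ i ∈ D, c i = 0 := by
  induction Q using Finset.induction_on generalizing D v c with
  | empty =>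
    have hv1 : ∀ i ∈ D, v i = 1 := fun i hi =>
      (Nat.primeFactors_eq_empty.1 (Finset.subset_empty.1 (hvQ i hi))).resolve_left
        (hsf i hi).ne_zero
    intro i hi
    rwa [Finset.sum_eq_single_of_mem i hi
        fun j hj hji => absurd (hv hj hi (by rw [hv1 j hj, hv1 i hi])) hji,
      hv1 i hi, Nat.cast_one, sqrt_one, mul_one, Rat.cast_eq_zero] at h
  | insert p Q hpQ ih =>
    have hp : p.Prime := hQ p (Finset.mem_insert_self p Q)
    have hQ' : ∀ q ∈ Q, q.Prime := fun q hq => hQ q (Finset.mem_insert_of_mem hq)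
    have hvQ₀ : ∀ i ∈ D.filter (¬ p ∣ v ·), (v i).primeFactors ⊆ Q := by
      intro i hi
      obtain ⟨hiD, hpi⟩ := Finset.mem_filter.1 hi
      exact (Finset.subset_insert_iff_of_notMem fun hp' => hpi (Nat.dvd_of_mem_primeFactors hp')).1
        (hvQ i hiD)
    have hvQ₁ : ∀ i ∈ D.filter (p ∣ v ·), (v i / p).primeFactors ⊆ Q := by
      intro i hi
      obtain ⟨hiD, hpi⟩ := Finset.mem_filter.1 hi
      rw [Nat.primeFactors_div_of_squarefree (hsf i hiD) hp hpi]
      exact Finset.subset_insert_iff.1 (hvQ i hiD)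
    rw [sum_mul_sqrt_eq_add_mul_sqrt D v _ p] at h
    obtain ⟨hA, hB⟩ := Subfield.eq_zero_of_add_mul_eq_zero
      (Subfield.sum_mem _ fun i hi =>
        mul_mem (SubfieldClass.ratCast_mem _ _) (sqrt_mem_sqrtField (hvQ₀ i hi)))
      (Subfield.sum_mem _ fun i hi =>
        mul_mem (SubfieldClass.ratCast_mem _ _) (sqrt_mem_sqrtField (hvQ₁ i hi)))
      (sqrt_notMem_sqrtField hQ' hpQ (by simp [hp.factorization_self])) h
    intro i hi
    by_cases hpi : p ∣ v i
    · refine ih hQ' (v := (v · / p)) ?_ ?_ hvQ₁ hB i (Finset.mem_filter.2 ⟨hi, hpi⟩)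
      · intro x hx y hy hxy
        obtain ⟨hxD, hpx⟩ := Finset.mem_filter.1 hx
        obtain ⟨hyD, hpy⟩ := Finset.mem_filter.1 hy
        exact hv hxD hyD ((Nat.div_left_inj hpx hpy).1 hxy)
      · intro j hj
        obtain ⟨hjD, hpj⟩ := Finset.mem_filter.1 hj
        exact (hsf j hjD).squarefree_of_dvd (Nat.div_dvd_of_dvd hpj)
    · exact ih hQ' (hv.mono (Finset.filter_subset _ _))
        (fun j hj => hsf j (Finset.mem_filter.1 hj).1) hvQ₀ hA i (Finset.mem_filter.2 ⟨hi, hpi⟩)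

theorem ussr_stmt_0_general (m : ℕ) (s : Fin m → ℕ)
    (hsq : ∀ i, Squarefree (s i)) (hinj : Function.Injective s)
    (c : Fin m → ℚ) (h : ∑ i, (c i : ℝ) * Real.sqrt (s i) = 0) :
    ∀ i, c i = 0 := fun i =>
  eq_zero_of_sum_mul_sqrt_eq_zero (Q := Finset.univ.biUnion fun j => (s j).primeFactors)
    (by simp +contextual) hinj.injOn (fun j _ => hsq j)
    (fun j _ => Finset.subset_biUnion_of_mem (fun j => (s j).primeFactors) (Finset.mem_univ j))
    h i (Finset.mem_univ i)

theorem ussr_stmt_0 (m : ℕ) (s : Fin m → ℕ) (hpos : ∀ i, 0 < s i)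
    (hsq : ∀ i, Squarefree (s i)) (hinj : Function.Injective s)
    (c : Fin m → ℚ) (h : ∑ i, (c i : ℝ) * Real.sqrt (s i) = 0) :
    ∀ i, c i = 0 :=
  ussr_stmt_0_general m s hsq hinj c h
end

section
/- If p₁, ..., p_k are distinct primes, then the field extension ℚ(√p₁, ..., √p_k) has degree exactly 2^k over ℚ. -/
/-!
A stronger claim is proved by induction on `k`: `√m ∉ ℚ(√p₁, …, √p_k)` for every squarefree
`m ≠ 1` prime to all the `pᵢ`. Write that field as `K(x)` with `x = √p₁`, so `x ∉ K` and `K(x)`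
has basis `1, x` over `K`. Squaring `a + b x` shows that an element of `K(x)` whose square lies
in `K` is of the form `a` or `b x`; hence `√m ∈ K(x)` would put `√m` or `√(m p₁)` in `K`.
Since `x ∉ K`, each square root doubles the degree.
-/

open IntermediateField Polynomial

namespace IntermediateField

variable {F L : Type*} [Field F] [Field L] [Algebra F L] (K : IntermediateField F L) {x : L}

theorem isIntegral_of_sq_mem (hsq : x ^ 2 ∈ K) : IsIntegral K x :=
  IsIntegral.of_pow two_pos (isIntegral_algebraMap (x := (⟨x ^ 2, hsq⟩ : K)))

theorem natDegree_minpoly_eq_two_of_sq_mem (hsq : x ^ 2 ∈ K) (hx : x ∉ K) :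
    (minpoly K x).natDegree = 2 := by
  refine le_antisymm ?_ ((minpoly.two_le_natDegree_iff (isIntegral_of_sq_mem K hsq)).mpr ?_)
  · have hmonic : (X ^ 2 - C (⟨x ^ 2, hsq⟩ : K)).Monic := monic_X_pow_sub_C _ two_ne_zero
    have := minpoly.degree_le_of_ne_zero K x hmonic.ne_zero (by simp)
    rw [degree_X_pow_sub_C two_pos] at this
    exact natDegree_le_of_degree_le this
  · simpa using hx

theorem finrank_adjoin_simple_eq_two_of_sq_mem (hsq : x ^ 2 ∈ K) (hx : x ∉ K) :
    Module.finrank K K⟮x⟯ = 2 := by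
  rw [adjoin.finrank (isIntegral_of_sq_mem K hsq), natDegree_minpoly_eq_two_of_sq_mem K hsq hx]

theorem exists_eq_add_mul_of_mem_adjoin_simple (hsq : x ^ 2 ∈ K) (hx : x ∉ K) {y : L}
    (hy : y ∈ K⟮x⟯) : ∃ a ∈ K, ∃ b ∈ K, y = a + b * x := by
  let pb := adjoin.powerBasis (isIntegral_of_sq_mem K hsq)
  obtain ⟨f, hdeg, hf⟩ := pb.exists_eq_aeval ⟨y, hy⟩
  have hdim : pb.dim = 2 := natDegree_minpoly_eq_two_of_sq_mem K hsq hx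
  obtain ⟨b, a, rfl⟩ := exists_eq_X_add_C_of_natDegree_le_one (by omega : f.natDegree ≤ 1)
  refine ⟨a, a.2, b, b.2, ?_⟩
  simpa [pb, add_comm] using congrArg Subtype.val hf

theorem mem_or_mul_mem_of_sq_mem_adjoin_simple (h2 : (2 : L) ≠ 0) (hsq : x ^ 2 ∈ K)
    (hx : x ∉ K) {y : L} (hy : y ∈ K⟮x⟯) (hysq : y ^ 2 ∈ K) : y ∈ K ∨ y * x ∈ K := by
  obtain ⟨a, ha, b, hb, rfl⟩ := exists_eq_add_mul_of_mem_adjoin_simple K hsq hx hy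
  by_cases hab : a * b = 0
  · rcases mul_eq_zero.mp hab with rfl | rfl
    · right
      simpa [mul_assoc, ← sq] using K.mul_mem hb hsq
    · left
      simpa using ha
  · -- `(a + b x)² = a² + b² x² + 2ab x`, so `x` would lie in `K`
    obtain ⟨ha0, hb0⟩ := mul_ne_zero_iff.mp hab
    have hx_eq : x = ((a + b * x) ^ 2 - a ^ 2 - b ^ 2 * x ^ 2) / (2 * (a * b)) := by
      field_simp
      ring
    refine absurd ?_ hx
    rw [hx_eq]
    exact K.div_mem (K.sub_mem (K.sub_mem hysq (pow_mem ha 2)) (K.mul_mem (pow_mem hb 2) hsq))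
      (K.mul_mem (ofNat_mem K 2) (K.mul_mem ha hb))

theorem adjoin_range_fin_succ {n : ℕ} (f : Fin (n + 1) → L) :
    adjoin F (Set.range f) =
      (adjoin (adjoin F (Set.range (Fin.tail f))) {f 0}).restrictScalars F := by
  rw [adjoin_adjoin_left, Set.union_singleton, Fin.range_fin_succ]

end IntermediateField

theorem Nat.not_isSquare_of_squarefree {m : ℕ} (hm : Squarefree m) (hm1 : m ≠ 1) :
    ¬IsSquare m := by
  rintro ⟨r, rfl⟩
  obtain rfl : r = 1 := Nat.isUnit_iff.mp (hm r dvd_rfl)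
  exact hm1 rfl

theorem Nat.Prime.not_dvd_of_injective {ι : Type*} {p : ι → ℕ} (hp : ∀ i, (p i).Prime)
    (hinj : Function.Injective p) {i j : ι} (hij : i ≠ j) : ¬p i ∣ p j :=
  fun h => hij (hinj ((Nat.prime_dvd_prime_iff_eq (hp i) (hp j)).mp h))

theorem sqrt_notMem_adjoin_sqrt_primes {k : ℕ} (p : Fin k → ℕ) (hp : ∀ i, (p i).Prime)
    (hinj : Function.Injective p) {m : ℕ} (hm : Squarefree m) (hm1 : m ≠ 1)
    (hpm : ∀ i, ¬p i ∣ m) :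
    √(m : ℝ) ∉ adjoin ℚ (Set.range fun i => √(p i : ℝ)) := by
  induction k generalizing m with
  | zero =>
    rw [Set.range_eq_empty, adjoin_empty, mem_bot]
    rintro ⟨q, hq⟩
    exact irrational_sqrt_natCast_iff.mpr (Nat.not_isSquare_of_squarefree hm hm1) ⟨q, hq⟩
  | succ k ih =>
    set K := adjoin ℚ (Set.range fun i => √(Fin.tail p i : ℝ))
    have ih' : ∀ {n : ℕ}, Squarefree n → n ≠ 1 → (∀ i, ¬Fin.tail p i ∣ n) → √(n : ℝ) ∉ K :=
      ih (Fin.tail p) (fun i => hp _) (hinj.comp (Fin.succ_injective k))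
    have htail (i : Fin k) : ¬Fin.tail p i ∣ p 0 :=
      Nat.Prime.not_dvd_of_injective hp hinj i.succ_ne_zero
    have hP : √(p 0 : ℝ) ∉ K := ih' (hp 0).squarefree (hp 0).one_lt.ne' htail
    rw [adjoin_range_fin_succ, mem_restrictScalars]
    intro hmem
    rcases mem_or_mul_mem_of_sq_mem_adjoin_simple K two_ne_zero (by simp) hP hmem (by simp)
      with hmK | hmPK
    · exact ih' hm hm1 (fun i => hpm i.succ) hmK
    · refine ih' (n := m * p 0) ?_ ?_ ?_ (by simpa [Real.sqrt_mul] using hmPK)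
      · exact Nat.squarefree_mul_iff.mpr
          ⟨((hp 0).coprime_iff_not_dvd.mpr (hpm 0)).symm, hm, (hp 0).squarefree⟩
      · simp [(hp 0).ne_one]
      · exact fun i h => ((hp i.succ).dvd_mul.mp h).elim (hpm i.succ) (htail i)

theorem ussr_stmt_4 (k : ℕ) (p : Fin k → ℕ) (hp : ∀ i, (p i).Prime)
    (hinj : Function.Injective p) :
    Module.finrank ℚ
      (IntermediateField.adjoin ℚ (Set.range fun i => Real.sqrt (p i))) = 2 ^ k := by
  induction k with
  | zero => simp
  | succ k ih =>
    set K := adjoin ℚ (Set.range fun i => √(Fin.tail p i : ℝ))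
    have hP : √(p 0 : ℝ) ∉ K := sqrt_notMem_adjoin_sqrt_primes _ (fun i => hp _)
      (hinj.comp (Fin.succ_injective k)) (hp 0).squarefree (hp 0).one_lt.ne'
      (fun i => Nat.Prime.not_dvd_of_injective hp hinj i.succ_ne_zero)
    rw [adjoin_range_fin_succ]
    change Module.finrank ℚ K⟮√(p 0 : ℝ)⟯ = _
    rw [← Module.finrank_mul_finrank ℚ K,
      finrank_adjoin_simple_eq_two_of_sq_mem K (by simp) hP,
      show Module.finrank ℚ K = 2 ^ k from ih _ (fun i => hp _) (hinj.comp (Fin.succ_injective k)),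
      pow_succ]
end

section
/- Let f : {−1,0,1}^m → {±1} be a linear threshold function realized by real weights w₀, ..., wₘ. Then there exist integer weights u₀, ..., uₘ each of bit-length O(m log m) realizing the same function. -/
/-!
Scaling the real weights by the least margin on the positive points turns the threshold function
into a feasible point of the system `(-1, x) ⬝ᵥ v ≥ 1` for `f x = 1` and `(1, -x) ⬝ᵥ v ≥ 0` for
`f x = -1`, all of whose coefficients lie in `{-1, 0, 1}`. Among the feasible points take one whose
set of tight constraints is maximal; by the ratio test the tight rows then span all rows. Take a
maximal independent family `B` of tight rows with right-hand sides `c`, and let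
`u = Bᵀ (cramer (B Bᵀ) c)`, so that `B u = det (B Bᵀ) • c`. Then `a ⬝ᵥ u = det (B Bᵀ) * (a ⬝ᵥ v)`
for every row `a`, so `±u` is an integer solution up to the positive factor `|det (B Bᵀ)|`.
Bounding `det` of matrices with entries at most `n = m + 1` by `k! nᵏ` gives `|u j| ≤ n^(3n)`,
i.e. bit length `O(m log m)`.
-/

open Finset Matrix
open scoped Nat

section Feasibility

lemma dotProduct_eq_zero_of_mem_span {R κ : Type*} [CommSemiring R] [Fintype κ]
    {s : Set (κ → R)} {x d : κ → R}
    (hx : x ∈ Submodule.span R s) (hs : ∀ y ∈ s, y ⬝ᵥ d = 0) : x ⬝ᵥ d = 0 := by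
  induction hx using Submodule.span_induction with
  | mem y hy => exact hs y hy
  | zero => exact zero_dotProduct d
  | add y z _ _ hy hz => rw [add_dotProduct, hy, hz, add_zero]
  | smul c y _ hy => rw [smul_dotProduct, hy, smul_zero]

variable {𝕜 ι κ : Type*} [Field 𝕜] [Fintype κ]

def tightSet (a : ι → κ → 𝕜) (b : ι → 𝕜) (v : κ → 𝕜) : Set ι := {i | a i ⬝ᵥ v = b i}

variable {a : ι → κ → 𝕜} {b : ι → 𝕜}

@[simp]
lemma mem_tightSet {v : κ → 𝕜} {i : ι} : i ∈ tightSet a b v ↔ a i ⬝ᵥ v = b i := Iff.rfl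

variable [LinearOrder 𝕜] [IsStrictOrderedRing 𝕜]

/-- Ratio test: move from `v` along `d` until the first constraint decreasing along `d` becomes
tight. -/
lemma exists_tightSet_ssubset [Finite ι] {v d : κ → 𝕜} (hv : ∀ i, b i ≤ a i ⬝ᵥ v)
    (hd : ∀ i ∈ tightSet a b v, a i ⬝ᵥ d = 0) {j : ι} (hj : a j ⬝ᵥ d < 0) :
    ∃ v', (∀ i, b i ≤ a i ⬝ᵥ v') ∧ tightSet a b v ⊂ tightSet a b v' := by
  set ratio : ι → 𝕜 := fun i => (a i ⬝ᵥ v - b i) / -(a i ⬝ᵥ d)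
  obtain ⟨i₀, hi₀ : a i₀ ⬝ᵥ d < 0, hmin⟩ :=
    {i | a i ⬝ᵥ d < 0}.exists_min_image ratio (Set.toFinite _) ⟨j, hj⟩
  have hdot : ∀ i, a i ⬝ᵥ (v + ratio i₀ • d) = a i ⬝ᵥ v + ratio i₀ * a i ⬝ᵥ d := fun i => by
    rw [dotProduct_add, dotProduct_smul, smul_eq_mul]
  have hratio : 0 ≤ ratio i₀ := div_nonneg (sub_nonneg.2 (hv i₀)) (by linarith)
  refine ⟨v + ratio i₀ • d, fun i => ?_, fun i hi => ?_, fun hsub => ?_⟩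
  · rw [hdot]
    rcases lt_or_ge (a i ⬝ᵥ d) 0 with hi | hi
    · have := (le_div_iff₀ (neg_pos.2 hi)).1 (hmin i hi)
      linarith
    · linarith [hv i, mul_nonneg hratio hi]
  · rw [mem_tightSet] at hi ⊢
    rw [hdot, hd i hi, hi, mul_zero, add_zero]
  · have htight : i₀ ∈ tightSet a b (v + ratio i₀ • d) := by
      have hne := hi₀.ne
      rw [mem_tightSet, hdot]
      dsimp only [ratio]
      field_simp
      ring
    exact hi₀.ne (hd i₀ (hsub htight))

theorem exists_feasible_forall_dotProduct_eq_zero [Finite ι]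
    (hsol : ∃ v, ∀ i, b i ≤ a i ⬝ᵥ v) :
    ∃ v, (∀ i, b i ≤ a i ⬝ᵥ v) ∧
      ∀ d, (∀ i ∈ tightSet a b v, a i ⬝ᵥ d = 0) → ∀ i, a i ⬝ᵥ d = 0 := by
  obtain ⟨v, hv, hmax⟩ := Set.Finite.exists_maximalFor' (tightSet a b)
    {v | ∀ i, b i ≤ a i ⬝ᵥ v} (Set.toFinite _) hsol
  refine ⟨v, hv, fun d hd => ?_⟩
  by_contra! ⟨j, hj⟩
  wlog hneg : a j ⬝ᵥ d < 0 generalizing d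
  · refine this (-d) (fun i hi => by rw [dotProduct_neg, hd i hi, neg_zero]) ?_ ?_ <;>
      rw [dotProduct_neg]
    · exact neg_ne_zero.2 hj
    · exact neg_neg_of_pos (hj.lt_or_gt.resolve_left hneg)
  obtain ⟨v', hv', hssub⟩ := exists_tightSet_ssubset hv hd hneg
  exact hssub.not_subset (hmax hv' hssub.subset)

end Feasibility

section IntegerSolutions

lemma Int.cast_dotProduct {R κ : Type*} [Ring R] [Fintype κ] (x y : κ → ℤ) :
    ((x ⬝ᵥ y : ℤ) : R) = (Int.cast ∘ x) ⬝ᵥ (Int.cast ∘ y) :=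
  (Int.castRingHom R).map_dotProduct x y

lemma abs_dotProduct_le {R κ : Type*} [CommRing R] [LinearOrder R] [IsStrictOrderedRing R]
    [Fintype κ] {x y : κ → R} {M : R} (hx : ∀ i, |x i| ≤ 1) (hy : ∀ i, |y i| ≤ M) :
    |x ⬝ᵥ y| ≤ Fintype.card κ * M :=
  calc |x ⬝ᵥ y| ≤ ∑ i, |x i * y i| := abs_sum_le_sum_abs _ _
    _ ≤ ∑ _i : κ, M := sum_le_sum fun i _ => by
      rw [abs_mul]; exact (mul_le_of_le_one_left (abs_nonneg _) (hx i)).trans (hy i)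
    _ = Fintype.card κ * M := by simp

lemma det_mul_transpose_ne_zero {𝕜 k n : Type*} [Field 𝕜] [LinearOrder 𝕜] [IsStrictOrderedRing 𝕜]
    [Fintype k] [DecidableEq k] [Fintype n] {M : Matrix k n 𝕜} (hM : LinearIndependent 𝕜 M.row) :
    (M * Mᵀ).det ≠ 0 := by
  rw [← isUnit_iff_ne_zero, ← isUnit_iff_isUnit_det, ← mulVec_injective_iff_isUnit,
    ← coe_mulVecLin, ← LinearMap.ker_eq_bot]
  have hker := ker_mulVecLin_transpose_mul_self Mᵀ
  rw [transpose_transpose] at hker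
  rw [hker, LinearMap.ker_eq_bot, coe_mulVecLin]
  convert vecMul_injective_iff.2 hM using 1
  exact funext fun x => mulVec_transpose M x

lemma mul_factorial_mul_pow_le_pow {k n : ℕ} (h : k ≤ n) : k * k ! * n ^ k ≤ n ^ (3 * n) := by
  rcases k.eq_zero_or_pos with rfl | hk
  · simp
  · have hn : n ≠ 0 := (hk.trans_le h).ne'
    calc k * k ! * n ^ k ≤ n ^ n * n ^ n * n ^ n := by
          gcongr
          · exact h.trans (Nat.le_self_pow hn n)
          · exact (Nat.factorial_le h).trans (Nat.factorial_le_pow n)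
          · exact Nat.one_le_iff_ne_zero.2 hn
      _ = n ^ (3 * n) := by ring

lemma abs_transpose_mulVec_cramer_le {k : Type*} [Fintype k] [DecidableEq k] {n : ℕ}
    (hk : Fintype.card k ≤ n) {B : Matrix k (Fin n) ℤ} {c : k → ℤ} (hB : ∀ y j, |B y j| ≤ 1)
    (hc : ∀ y, |c y| ≤ 1) (j : Fin n) :
    |(Bᵀ *ᵥ cramer (B * Bᵀ) c) j| ≤ n ^ (3 * n) := by
  have hG : ∀ y y', |(B * Bᵀ) y y'| ≤ n := fun y y' => by
    simpa [mul_apply'] using abs_dotProduct_le (hB y) (hB y')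
  have hcramer : ∀ y, |cramer (B * Bᵀ) c y| ≤ (Fintype.card k)! * n ^ Fintype.card k := by
    intro y
    have hn : (1 : ℤ) ≤ n := by exact_mod_cast Fintype.card_pos_iff.2 ⟨y⟩ |>.trans_le hk
    rw [cramer_apply]
    simpa using det_le (abv := AbsoluteValue.abs) fun y₁ y₂ => show |_| ≤ (n : ℤ) by
      rcases eq_or_ne y₂ y with rfl | hy
      · rw [updateCol_self]; exact (hc y₁).trans hn
      · rw [updateCol_ne hy]; exact hG y₁ y₂
  calc |(Bᵀ *ᵥ cramer (B * Bᵀ) c) j|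
      ≤ Fintype.card k * ((Fintype.card k)! * n ^ Fintype.card k) :=
        abs_dotProduct_le (fun y => hB y j) hcramer
    _ ≤ n ^ (3 * n) := by
        rw [← mul_assoc]; exact_mod_cast mul_factorial_mul_pow_le_pow hk

variable {𝕜 : Type*} [Field 𝕜] [LinearOrder 𝕜] [IsStrictOrderedRing 𝕜]

theorem exists_int_dotProduct_eq_mul {ι : Type*} {n : ℕ} (a : ι → Fin n → ℤ) (b : ι → ℤ)
    (ha : ∀ i j, |a i j| ≤ 1) (hb : ∀ i, |b i| ≤ 1)
    (hsol : ∃ v : Fin n → 𝕜, ∀ i, (Int.cast ∘ a i) ⬝ᵥ v = b i) :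
    ∃ (D : ℤ) (u : Fin n → ℤ), 0 < D ∧ (∀ j, |u j| ≤ n ^ (3 * n)) ∧
      ∀ i, a i ⬝ᵥ u = D * b i := by
  classical
  obtain ⟨v, hv⟩ := hsol
  obtain ⟨k, sel, -, hspan, hind⟩ :=
    exists_linearIndependent' 𝕜 fun i => (Int.cast ∘ a i : Fin n → 𝕜)
  have : Fintype k := @Fintype.ofFinite k hind.finite
  have hk : Fintype.card k ≤ n := by simpa using hind.fintype_card_le_finrank
  set B : Matrix k (Fin n) ℤ := fun y => a (sel y)
  set u := Bᵀ *ᵥ cramer (B * Bᵀ) (b ∘ sel)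
  have hdet : (B * Bᵀ).det ≠ 0 := by
    have h := det_mul_transpose_ne_zero (M := B.map (Int.castRingHom 𝕜)) hind
    rw [← transpose_map, ← Matrix.map_mul, ← RingHom.mapMatrix_apply,
      ← RingHom.map_det] at h
    exact fun h0 => h (by rw [h0, map_zero])
  have hBu : B *ᵥ u = (B * Bᵀ).det • (b ∘ sel) := by rw [mulVec_mulVec, mulVec_cramer]
  have hsel : ∀ y, a (sel y) ⬝ᵥ u = (B * Bᵀ).det * b (sel y) := fun y => congrFun hBu y
  have hu : ∀ j, |u j| ≤ n ^ (3 * n) :=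
    abs_transpose_mulVec_cramer_le hk (fun y => ha (sel y)) (fun y => hb (sel y))
  suffices hall : ∀ i, a i ⬝ᵥ u = (B * Bᵀ).det * b i by
    rcases hdet.lt_or_gt with hneg | hpos
    · exact ⟨_, -u, neg_pos.2 hneg, fun j => by simpa using hu j,
        fun i => by rw [dotProduct_neg, hall, neg_mul]⟩
    · exact ⟨_, u, hpos, hu, hall⟩
  intro i
  -- `u` and `det (B Bᵀ) • v` have the same products with the rows of `B`, which span all rows.
  have hd : (Int.cast ∘ a i) ⬝ᵥ (Int.cast ∘ u - ((B * Bᵀ).det : 𝕜) • v) = 0 := by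
    refine dotProduct_eq_zero_of_mem_span
      (hspan ▸ Submodule.subset_span (Set.mem_range_self i)) ?_
    rintro _ ⟨y, rfl⟩
    rw [Function.comp_apply, dotProduct_sub, dotProduct_smul, hv, ← Int.cast_dotProduct, hsel]
    simp
  rw [dotProduct_sub, dotProduct_smul, hv, ← Int.cast_dotProduct] at hd
  rw [sub_eq_zero, smul_eq_mul] at hd
  exact_mod_cast hd

theorem exists_int_le_dotProduct_of_feasible {ι : Type*} [Finite ι] {n : ℕ} (a : ι → Fin n → ℤ)
    (b : ι → ℤ) (ha : ∀ i j, |a i j| ≤ 1) (hb : ∀ i, |b i| ≤ 1)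
    (hsol : ∃ v : Fin n → 𝕜, ∀ i, (b i : 𝕜) ≤ (Int.cast ∘ a i) ⬝ᵥ v) :
    ∃ (D : ℤ) (u : Fin n → ℤ), 0 < D ∧ (∀ j, |u j| ≤ n ^ (3 * n)) ∧
      ∀ i, D * b i ≤ a i ⬝ᵥ u := by
  obtain ⟨v, hv, hspan⟩ := exists_feasible_forall_dotProduct_eq_zero
    (a := fun i => (Int.cast ∘ a i : Fin n → 𝕜)) (b := fun i => (b i : 𝕜)) hsol
  obtain ⟨D, u, hD, hu, htight⟩ := exists_int_dotProduct_eq_mul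
    (fun i : tightSet (fun i => (Int.cast ∘ a i : Fin n → 𝕜)) (fun i => (b i : 𝕜)) v => a i)
    (fun i => b i) (fun i => ha i) (fun i => hb i) ⟨v, fun i => i.2⟩
  refine ⟨D, u, hD, hu, fun i => ?_⟩
  have hd := hspan (Int.cast ∘ u - (D : 𝕜) • v) (fun i hi => by
    rw [dotProduct_sub, dotProduct_smul, ← Int.cast_dotProduct, htight ⟨i, hi⟩, mem_tightSet.1 hi]
    simp) i
  rw [dotProduct_sub, dotProduct_smul, ← Int.cast_dotProduct, sub_eq_zero, smul_eq_mul] at hd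
  have : (D : 𝕜) * b i ≤ D * ((Int.cast ∘ a i) ⬝ᵥ v) := by gcongr; exact hv i
  exact_mod_cast hd ▸ this

end IntegerSolutions

lemma exists_pos_forall_le {ι 𝕜 : Type*} [Finite ι] [Field 𝕜] [LinearOrder 𝕜]
    [IsStrictOrderedRing 𝕜] {s : Set ι} {f : ι → 𝕜} (hf : ∀ i ∈ s, 0 < f i) :
    ∃ δ, 0 < δ ∧ ∀ i ∈ s, δ ≤ f i := by
  rcases s.eq_empty_or_nonempty with rfl | hs
  · exact ⟨1, one_pos, by simp⟩
  · obtain ⟨i₀, hi₀, hmin⟩ := s.exists_min_image f s.toFinite hs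
    exact ⟨f i₀, hf i₀ hi₀, hmin⟩

section Threshold

variable {𝕜 ι : Type*} [Field 𝕜] [LinearOrder 𝕜] [IsStrictOrderedRing 𝕜] [Finite ι] {m : ℕ}

lemma Int.cast_comp_vecCons {R : Type*} [IntCast R] (c : ℤ) (y : Fin m → ℤ) :
    (Int.cast ∘ vecCons c y : Fin (m + 1) → R) = vecCons (c : R) (Int.cast ∘ y) := by
  ext j
  exact Fin.cases rfl (fun _ => rfl) j

lemma Int.cast_comp_neg {R κ : Type*} [Ring R] (y : κ → ℤ) :
    (Int.cast ∘ (-y) : κ → R) = -(Int.cast ∘ y) :=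
  funext fun _ => Int.cast_neg _

theorem exists_int_threshold_weights (x : ι → Fin m → ℤ) (hx : ∀ p i, |x p i| ≤ 1)
    (P : ι → Prop) (w₀ : 𝕜) (w : Fin m → 𝕜) (hw : ∀ p, P p ↔ w₀ < w ⬝ᵥ (Int.cast ∘ x p)) :
    ∃ (u₀ : ℤ) (u : Fin m → ℤ), |u₀| ≤ (m + 1) ^ (3 * (m + 1)) ∧
      (∀ i, |u i| ≤ (m + 1) ^ (3 * (m + 1))) ∧
      ∀ p, P p ↔ u₀ < u ⬝ᵥ x p := by
  classical
  obtain ⟨δ, hδ, hδle⟩ := exists_pos_forall_le (s := {p | P p})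
    (f := fun p => w ⬝ᵥ (Int.cast ∘ x p) - w₀) fun p hp => sub_pos.2 ((hw p).1 hp)
  set a : ι → Fin (m + 1) → ℤ := fun p => if P p then vecCons (-1) (x p) else -vecCons (-1) (x p)
  set b : ι → ℤ := fun p => if P p then 1 else 0
  have ha : ∀ p j, |a p j| ≤ 1 := by
    intro p j
    dsimp only [a]
    refine Fin.cases ?_ (fun i => ?_) j <;> split_ifs <;> simp [hx]
  have hb : ∀ p, |b p| ≤ 1 := by intro p; dsimp only [b]; split_ifs <;> simp
  have hsol : ∃ v : Fin (m + 1) → 𝕜, ∀ p, (b p : 𝕜) ≤ (Int.cast ∘ a p) ⬝ᵥ v := by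
    refine ⟨δ⁻¹ • vecCons w₀ w, fun p => ?_⟩
    have hrow : (Int.cast ∘ vecCons (-1) (x p)) ⬝ᵥ (δ⁻¹ • vecCons w₀ w) =
        δ⁻¹ * (w ⬝ᵥ (Int.cast ∘ x p) - w₀) := by
      rw [dotProduct_smul, Int.cast_comp_vecCons, cons_dotProduct_cons, dotProduct_comm,
        smul_eq_mul]
      push_cast
      ring
    by_cases hp : P p
    · simp only [a, b, if_pos hp, hrow, Int.cast_one]
      rw [le_inv_mul_iff₀ hδ, mul_one]
      exact hδle p hp
    · simp only [a, b, if_neg hp, Int.cast_comp_neg, neg_dotProduct, hrow, Int.cast_zero]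
      have hle : w ⬝ᵥ (Int.cast ∘ x p) ≤ w₀ := not_lt.1 (mt (hw p).2 hp)
      exact neg_nonneg.2 (mul_nonpos_of_nonneg_of_nonpos (inv_nonneg.2 hδ.le) (by linarith))
  obtain ⟨D, u, hD, hu, hineq⟩ := exists_int_le_dotProduct_of_feasible a b ha hb hsol
  refine ⟨vecHead u, vecTail u, by exact_mod_cast hu 0, fun i => by exact_mod_cast hu i.succ,
    fun p => ?_⟩
  have hrow : vecCons (-1) (x p) ⬝ᵥ u = vecTail u ⬝ᵥ x p - vecHead u := by
    rw [cons_dotProduct, dotProduct_comm]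
    ring
  have := hineq p
  by_cases hp : P p
  · simp only [a, b, if_pos hp, hrow, mul_one] at this
    simp only [hp, true_iff]
    linarith
  · simp only [a, b, if_neg hp, neg_dotProduct, hrow, mul_zero] at this
    simp only [hp, false_iff, not_lt]
    linarith

end Threshold

lemma pow_le_two_rpow (m : ℕ) :
    ((m : ℝ) + 1) ^ (3 * (m + 1)) ≤ 2 ^ (3 / Real.log 2 * (m + 1) * Real.log (m + 2)) := by
  have hlog : Real.log 2 * (3 / Real.log 2 * (m + 1) * Real.log (m + 2)) =
      (3 * (m + 1) : ℕ) * Real.log (m + 2) := by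
    field_simp
    push_cast
    ring
  rw [Real.rpow_def_of_pos two_pos, hlog, Real.exp_nat_mul, Real.exp_log (by positivity)]
  gcongr
  linarith

theorem ussr_stmt_9 :
    ∃ C : ℝ, 0 < C ∧
      ∀ (m : ℕ) (f : (Fin m → ℤ) → ℤ), (∀ x, f x = 1 ∨ f x = -1) →
      ∀ (w₀ : ℝ) (w : Fin m → ℝ),
        (∀ x : Fin m → ℤ, (∀ i, x i ∈ ({-1, 0, 1} : Set ℤ)) →
          (f x = 1 ↔ w₀ < ∑ i, w i * (x i : ℝ))) →
        ∃ (u₀ : ℤ) (u : Fin m → ℤ),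
          (|u₀| : ℝ) ≤ 2 ^ (C * (m + 1) * Real.log (m + 2)) ∧
          (∀ i, (|u i| : ℝ) ≤ 2 ^ (C * (m + 1) * Real.log (m + 2))) ∧
          ∀ x : Fin m → ℤ, (∀ i, x i ∈ ({-1, 0, 1} : Set ℤ)) →
            (f x = 1 ↔ u₀ < ∑ i, u i * x i) := by
  refine ⟨3 / Real.log 2, by positivity, fun m f _ w₀ w hw => ?_⟩
  obtain ⟨u₀, u, hu₀, hu, hiff⟩ := exists_int_threshold_weights
    (ι := Fin m → ({-1, 0, 1} : Set ℤ)) (fun p i => p i)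
    (fun p i => by rcases (p i).2 with h | h | h <;> rw [h] <;> norm_num)
    (fun p => f (fun i => p i) = 1) w₀ w fun p => hw _ fun i => (p i).2
  have hbound : ∀ z : ℤ, |z| ≤ (m + 1) ^ (3 * (m + 1)) →
      (|z| : ℝ) ≤ 2 ^ (3 / Real.log 2 * (m + 1) * Real.log (m + 2)) :=
    fun z hz => le_trans (by exact_mod_cast hz) (pow_le_two_rpow m)
  refine ⟨u₀, u, hbound u₀ hu₀, fun i => hbound (u i) (hu i), fun x hx => ?_⟩
  exact hiff fun i => ⟨x i, hx i⟩
end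

section
/- For every k ≥ 1 and distinct primes p₁, ..., p_k ≤ C·k·log(k+2) (which exist by the prime number theorem, for some absolute constant C), the number α = ∑ᵢ √pᵢ satisfies: every nonzero integer polynomial p with p(α) = 0 has degree at least 2^k. -/
namespace USSR18



open Nat Real Finset

-- Chebyshev-ish: 4^n ≤ (2n)^(π(2n)+1)
lemma cheb_nat (n : ℕ) (hn : 1 ≤ n) :
    4 ^ n ≤ (2 * n) ^ (Nat.primeCounting (2 * n) + 1) := by
  have h1 : 4 ^ n ≤ 2 * n * Nat.centralBinom n :=
    Nat.four_pow_le_two_mul_self_mul_centralBinom n hn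
  have h2 : Nat.centralBinom n ≤ (2 * n) ^ (Nat.primeCounting (2 * n)) := by
    have hprod := Nat.prod_pow_factorization_centralBinom n
    rw [← hprod]
    have hsub : (2 * n + 1).primesBelow ⊆ Finset.range (2 * n + 1) :=
      Finset.filter_subset _ _
    rw [← Finset.prod_subset hsub (by
      intro p hp hnp
      have : ¬ p.Prime := by
        intro hpr
        exact hnp (Nat.mem_primesBelow.2 ⟨Finset.mem_range.1 hp, hpr⟩)
      rw [Nat.factorization_eq_zero_of_not_prime _ this, pow_zero])]
    calc ∏ p ∈ (2 * n + 1).primesBelow, p ^ (Nat.centralBinom n).factorization p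
        ≤ ∏ _p ∈ (2 * n + 1).primesBelow, 2 * n := by
          apply Finset.prod_le_prod' -- maybe wrong name
          intro p hp
          exact Nat.pow_factorization_choose_le (by omega)
      _ = (2 * n) ^ ((2 * n + 1).primesBelow.card) := by
          rw [Finset.prod_const]
      _ = (2 * n) ^ (Nat.primeCounting (2 * n)) := by
          rw [Nat.primesBelow_card_eq_primeCounting']
          rfl
  calc 4 ^ n ≤ 2 * n * Nat.centralBinom n := h1
    _ ≤ 2 * n * (2 * n) ^ (Nat.primeCounting (2 * n)) := by
        exact Nat.mul_le_mul_left _ h2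
    _ = (2 * n) ^ (Nat.primeCounting (2 * n) + 1) := by ring

lemma exists_primes (k : ℕ) (hk : 1 ≤ k) :
    ∃ p : Fin k → ℕ, Function.Injective p ∧ (∀ i, (p i).Prime) ∧
      ∀ i, (p i : ℝ) ≤ 150 * k * Real.log (k + 2) := by
  set L : ℝ := Real.log (k + 2) with hL
  have hk1 : (1:ℝ) ≤ k := by exact_mod_cast hk
  have hL1 : 1 ≤ L := by
    rw [hL]
    rw [show (1:ℝ) = Real.log (Real.exp 1) by rw [Real.log_exp]]
    apply Real.log_le_log (Real.exp_pos 1)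
    have := Real.exp_one_lt_d9
    have h3 : (3:ℝ) ≤ (k:ℝ) + 2 := by linarith
    linarith
  have hLpos : 0 < L := by linarith
  set n : ℕ := ⌈50 * (k:ℝ) * L⌉₊ with hn
  have hnge : 50 * (k:ℝ) * L ≤ n := Nat.le_ceil _
  have hnge1 : 1 ≤ n := by
    have : (0:ℝ) < 50 * k * L := by positivity
    have := Nat.ceil_pos.2 this
    omega
  have hnle : (n:ℝ) ≤ 50 * k * L + 1 := (Nat.ceil_lt_add_one (by positivity)).le
  have h2nle : (2 * n : ℝ) ≤ 150 * k * L := by nlinarith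
  -- log(2n) ≤ 7 L
  have hlog2n : Real.log (2 * n) ≤ 7 * L := by
    have hLlek : L ≤ (k:ℝ) + 2 := by
      calc L ≤ ((k:ℝ)+2) - 1 := Real.log_le_sub_one_of_pos (by positivity)
        _ ≤ (k:ℝ) + 2 := by linarith
    have h1 : (2 * n : ℝ) ≤ 150 * ((k:ℝ)+2) * ((k:ℝ)+2) := by nlinarith
    have h2 : (150 : ℝ) ≤ ((k:ℝ)+2)^5 := by
      have : (3:ℝ) ≤ (k:ℝ)+2 := by linarith
      calc (150:ℝ) ≤ 3^5 := by norm_num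
        _ ≤ ((k:ℝ)+2)^5 := by
          apply pow_le_pow_left₀ (by norm_num) this
    have h3 : (2 * n : ℝ) ≤ ((k:ℝ)+2)^7 := by
      calc (2 * n : ℝ) ≤ 150 * ((k:ℝ)+2) * ((k:ℝ)+2) := h1
        _ ≤ ((k:ℝ)+2)^5 * ((k:ℝ)+2) * ((k:ℝ)+2) := by nlinarith
        _ = ((k:ℝ)+2)^7 := by ring
    calc Real.log (2*n) ≤ Real.log (((k:ℝ)+2)^7) := by
          apply Real.log_le_log (by positivity) h3
      _ = 7 * L := by rw [Real.log_pow]; push_cast; rw [hL]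
  -- π(2n) ≥ k
  have hpi : k ≤ Nat.primeCounting (2 * n) := by
    by_contra hcon
    push_neg at hcon
    have hcheb := cheb_nat n hnge1
    have hchebR : (n:ℝ) * Real.log 4 ≤ (Nat.primeCounting (2*n) + 1) * Real.log (2*n) := by
      have h4 : ((4:ℕ):ℝ) ^ n ≤ ((2*n:ℕ):ℝ) ^ (Nat.primeCounting (2*n) + 1) := by
        exact_mod_cast hcheb
      have hlog := Real.log_le_log (by positivity) h4
      rw [Real.log_pow, Real.log_pow] at hlog
      push_cast at hlog ⊢
      convert hlog using 2 <;> norm_num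
    have hlog4 : (1.38:ℝ) ≤ Real.log 4 := by
      have h2 := Real.log_two_gt_d9
      have : Real.log 4 = 2 * Real.log 2 := by
        rw [show (4:ℝ) = 2^2 by norm_num, Real.log_pow]; push_cast; ring
      linarith
    have hπ : ((Nat.primeCounting (2*n) : ℝ) + 1) ≤ k := by
      have : (Nat.primeCounting (2*n) : ℝ) ≤ (k:ℝ) - 1 := by
        have : (Nat.primeCounting (2*n) : ℝ) ≤ (k:ℝ) - 1 := by
          have hc : Nat.primeCounting (2*n) ≤ k - 1 := by omega
          have := (Nat.cast_le (α := ℝ)).2 hc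
          push_cast [Nat.cast_sub hk] at this
          linarith [this]
        exact this
      linarith
    have hlog2npos : 0 ≤ Real.log (2*n) := by
      apply Real.log_nonneg
      have : (1:ℝ) ≤ n := by exact_mod_cast hnge1
      linarith
    -- n log4 ≥ 50kL * 1.38 = 69kL ; (π+1) log(2n) ≤ k * 7L
    have h1 : 69 * (k:ℝ) * L ≤ (n:ℝ) * Real.log 4 := by nlinarith
    have h2 : ((Nat.primeCounting (2*n):ℝ) + 1) * Real.log (2*n) ≤ (k:ℝ) * (7 * L) := by
      apply mul_le_mul hπ hlog2n hlog2npos (by linarith)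
    nlinarith
  -- choose the first k primes
  refine ⟨fun i => Nat.nth Nat.Prime i, ?_, ?_, ?_⟩
  · intro i j hij
    have := Nat.nth_injective Nat.infinite_setOf_prime hij
    exact Fin.val_injective this
  · intro i; exact Nat.prime_nth_prime i
  · intro i
    have hcount : (i : ℕ) < Nat.count Nat.Prime (2 * n + 1) := by
      have : Nat.primeCounting (2*n) = Nat.count Nat.Prime (2*n+1) := rfl
      omega
    have := Nat.nth_lt_of_lt_count hcount
    have hle : Nat.nth Nat.Prime i ≤ 2 * n := by omega
    calc (Nat.nth Nat.Prime i : ℝ) ≤ (2 * n : ℝ) := by exact_mod_cast hle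
      _ ≤ 150 * k * L := h2nle


open Real Finset



-- squarefree-ness of a product of distinct primes, hence irrationality of its sqrt
lemma squarefree_prod_primes {p : ℕ → ℕ} {S : Finset ℕ}
    (hp : ∀ j ∈ S, (p j).Prime) (hinj : ∀ i ∈ S, ∀ j ∈ S, p i = p j → i = j) :
    Squarefree (∏ j ∈ S, p j) := by
  induction S using Finset.cons_induction with
  | empty => simpa using squarefree_one
  | cons a s ha ih =>
    rw [Finset.prod_cons]
    have hcop : Nat.Coprime (p a) (∏ j ∈ s, p j) := by
      apply Nat.Coprime.prod_right
      intro j hj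
      rw [Nat.coprime_primes (hp a (Finset.mem_cons_self a s)) (hp j (Finset.mem_cons_of_mem hj))]
      intro he
      exact ha (by rwa [hinj a (Finset.mem_cons_self a s) j (Finset.mem_cons_of_mem hj) he])
    rw [Nat.squarefree_mul hcop]
    exact ⟨(hp a (Finset.mem_cons_self a s)).prime.squarefree,
      ih (fun j hj => hp j (Finset.mem_cons_of_mem hj))
        (fun i hi j hj => hinj i (Finset.mem_cons_of_mem hi) j (Finset.mem_cons_of_mem hj))⟩

lemma irrational_sqrt_prod_primes {p : ℕ → ℕ} {S : Finset ℕ} (hS : S.Nonempty)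
    (hp : ∀ j ∈ S, (p j).Prime) (hinj : ∀ i ∈ S, ∀ j ∈ S, p i = p j → i = j) :
    Irrational (Real.sqrt (∏ j ∈ S, (p j : ℝ))) := by
  have hcast : (∏ j ∈ S, (p j : ℝ)) = ((∏ j ∈ S, p j : ℕ) : ℝ) := by push_cast; rfl
  rw [hcast, irrational_sqrt_natCast_iff]
  intro hsq
  obtain ⟨m, hm⟩ := hsq
  have hsf := squarefree_prod_primes hp hinj
  rw [hm] at hsf
  have := hsf m (dvd_refl _)
  have hm1 : m = 1 := Nat.isUnit_iff.1 this
  obtain ⟨j0, hj0⟩ := hS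
  have h2 : 2 ≤ ∏ j ∈ S, p j := by
    calc 2 ≤ p j0 := (hp j0 hj0).two_le
      _ ≤ ∏ j ∈ S, p j := Finset.single_le_prod' (fun i hi => (hp i hi).pos) hj0
  rw [hm, hm1] at h2
  omega

-- sqrt of a product
lemma sqrt_prod {ι : Type*} {S : Finset ι} (f : ι → ℝ) (h : ∀ j ∈ S, 0 ≤ f j) :
    Real.sqrt (∏ j ∈ S, f j) = ∏ j ∈ S, Real.sqrt (f j) := by
  induction S using Finset.cons_induction with
  | empty => simp
  | cons a s ha ih =>
    rw [Finset.prod_cons, Finset.prod_cons,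
      Real.sqrt_mul (h a (Finset.mem_cons_self a s)),
      ih (fun j hj => h j (Finset.mem_cons_of_mem hj))]


structure IsGood (F : Set ℝ) : Prop where
  rat : ∀ q : ℚ, ((q : ℝ)) ∈ F
  add : ∀ a b : ℝ, a ∈ F → b ∈ F → a + b ∈ F
  neg : ∀ a : ℝ, a ∈ F → -a ∈ F
  mul : ∀ a b : ℝ, a ∈ F → b ∈ F → a * b ∈ F
  inv : ∀ a : ℝ, a ∈ F → a⁻¹ ∈ F

lemma IsGood.zero {F : Set ℝ} (h : IsGood F) : (0:ℝ) ∈ F := by simpa using h.rat 0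
lemma IsGood.natCast {F : Set ℝ} (h : IsGood F) (n : ℕ) : (n:ℝ) ∈ F := by simpa using h.rat n
lemma IsGood.sub {F : Set ℝ} (h : IsGood F) (a b : ℝ) (ha : a ∈ F) (hb : b ∈ F) :
    a - b ∈ F := by
  rw [sub_eq_add_neg]; exact h.add _ _ ha (h.neg _ hb)

noncomputable def Kset (p : ℕ → ℕ) : ℕ → Set ℝ
  | 0 => Set.range (fun q : ℚ => (q : ℝ))
  | (i+1) => {x | ∃ a ∈ Kset p i, ∃ b ∈ Kset p i, x = a + b * Real.sqrt (p i)}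

theorem main (p : ℕ → ℕ) (k : ℕ) (hp : ∀ i < k, (p i).Prime)
    (hinj : ∀ i < k, ∀ j < k, p i = p j → i = j) :
    ∀ i, i ≤ k → IsGood (Kset p i) ∧
      (∀ S : Finset ℕ, S.Nonempty → (∀ j ∈ S, i ≤ j ∧ j < k) →
        Real.sqrt (∏ j ∈ S, (p j : ℝ)) ∉ Kset p i) := by
  intro i
  induction i with
  | zero =>
    intro _
    constructor
    · constructor
      · intro q; exact ⟨q, rfl⟩
      · rintro a b ⟨qa, rfl⟩ ⟨qb, rfl⟩; exact ⟨qa + qb, by push_cast; ring⟩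
      · rintro a ⟨qa, rfl⟩; exact ⟨-qa, by push_cast; ring⟩
      · rintro a b ⟨qa, rfl⟩ ⟨qb, rfl⟩; exact ⟨qa * qb, by push_cast; ring⟩
      · rintro a ⟨qa, rfl⟩; exact ⟨qa⁻¹, by push_cast; ring⟩
    · intro S hS hSk hmem
      obtain ⟨q, hq⟩ := hmem
      exact irrational_sqrt_prod_primes hS (fun j hj => hp j (hSk j hj).2)
        (fun a ha b hb => hinj a (hSk a ha).2 b (hSk b hb).2) ⟨q, hq⟩
  | succ i ih =>
    intro hik
    have hikk : i < k := hik
    obtain ⟨hG, hNM⟩ := ih (Nat.le_of_lt hikk)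
    have hs2 : Real.sqrt (p i) * Real.sqrt (p i) = (p i : ℝ) :=
      Real.mul_self_sqrt (Nat.cast_nonneg _)
    have hpiF : ((p i : ℝ)) ∈ Kset p i := hG.natCast _
    have hsnot : Real.sqrt (p i) ∉ Kset p i := by
      have := hNM ({i} : Finset ℕ) ⟨i, Finset.mem_singleton_self i⟩
        (by intro j hj; rw [Finset.mem_singleton] at hj; subst hj; exact ⟨le_refl _, hikk⟩)
      simpa [Finset.prod_singleton] using this
    have hGsucc : IsGood (Kset p (i+1)) := by
      constructor
      · intro q
        exact ⟨(q:ℝ), hG.rat q, 0, hG.zero, by ring⟩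
      · rintro x y ⟨a, ha, b, hb, rfl⟩ ⟨c, hc, d, hd, rfl⟩
        exact ⟨a + c, hG.add _ _ ha hc, b + d, hG.add _ _ hb hd, by ring⟩
      · rintro x ⟨a, ha, b, hb, rfl⟩
        exact ⟨-a, hG.neg _ ha, -b, hG.neg _ hb, by ring⟩
      · rintro x y ⟨a, ha, b, hb, rfl⟩ ⟨c, hc, d, hd, rfl⟩
        refine ⟨a * c + b * d * (p i), ?_, a * d + b * c, ?_, ?_⟩
        · exact hG.add _ _ (hG.mul _ _ ha hc) (hG.mul _ _ (hG.mul _ _ hb hd) hpiF)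
        · exact hG.add _ _ (hG.mul _ _ ha hd) (hG.mul _ _ hb hc)
        · linear_combination (b * d) * hs2
      · rintro x ⟨a, ha, b, hb, rfl⟩
        by_cases hb0 : b = 0
        · subst hb0
          refine ⟨a⁻¹, hG.inv _ ha, 0, hG.zero, by ring⟩
        · have hDmem : a * a - b * b * (p i) ∈ Kset p i :=
            hG.sub _ _ (hG.mul _ _ ha ha) (hG.mul _ _ (hG.mul _ _ hb hb) hpiF)
          have hDne : a * a - b * b * (p i) ≠ 0 := by
            intro h0
            have hfac : (a - b * Real.sqrt (p i)) * (a + b * Real.sqrt (p i)) = 0 := by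
              linear_combination h0 - (b*b) * hs2
            rcases mul_eq_zero.1 hfac with h1 | h1
            · have hv : Real.sqrt (p i) = b⁻¹ * a := by
                rw [inv_mul_eq_div, eq_div_iff hb0]
                linear_combination -h1
              exact hsnot (hv ▸ hG.mul _ _ (hG.inv _ hb) ha)
            · have hv : Real.sqrt (p i) = b⁻¹ * (-a) := by
                rw [inv_mul_eq_div, eq_div_iff hb0]
                linear_combination h1
              exact hsnot (hv ▸ hG.mul _ _ (hG.inv _ hb) (hG.neg _ ha))
          have hinvx : (a + b * Real.sqrt (p i))⁻¹ =
              a * (a * a - b * b * (p i))⁻¹ +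
              (-(b * (a * a - b * b * (p i))⁻¹)) * Real.sqrt (p i) := by
            apply inv_eq_of_mul_eq_one_right
            have h1 : (a + b * Real.sqrt (p i)) * (a - b * Real.sqrt (p i)) =
                a * a - b * b * (p i) := by
              linear_combination (-(b*b)) * hs2
            have h2 : (a + b * Real.sqrt (p i)) *
                (a * (a * a - b * b * (p i))⁻¹ +
                  (-(b * (a * a - b * b * (p i))⁻¹)) * Real.sqrt (p i)) =
                ((a + b * Real.sqrt (p i)) * (a - b * Real.sqrt (p i))) *
                  (a * a - b * b * (p i))⁻¹ := by ring
            rw [h2, h1, mul_inv_cancel₀ hDne]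
          rw [hinvx]
          exact ⟨_, hG.mul _ _ ha (hG.inv _ hDmem),
            _, hG.neg _ (hG.mul _ _ hb (hG.inv _ hDmem)), rfl⟩
    refine ⟨hGsucc, ?_⟩
    intro S hS hSk hmem
    obtain ⟨a, ha, b, hb, hab⟩ := hmem
    have hiS : i ∉ S := fun hi => by have := (hSk i hi).1; omega
    have hSk' : ∀ j ∈ S, i ≤ j ∧ j < k := fun j hj =>
      ⟨by have := (hSk j hj).1; omega, (hSk j hj).2⟩
    have hDnonneg : 0 ≤ ∏ j ∈ S, (p j : ℝ) :=
      Finset.prod_nonneg (fun j _ => Nat.cast_nonneg _)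
    have hDrat : (∏ j ∈ S, (p j : ℝ)) ∈ Kset p i := by
      have hc : (∏ j ∈ S, (p j : ℝ)) = ((∏ j ∈ S, p j : ℕ) : ℝ) := by push_cast; rfl
      rw [hc]; exact hG.natCast _
    by_cases hb0 : b = 0
    · exact hNM S hS hSk' (by rw [hab, hb0]; simpa using ha)
    · by_cases ha0 : a = 0
      · have hkey : Real.sqrt (∏ j ∈ insert i S, (p j : ℝ)) = b * (p i) := by
          rw [Finset.prod_insert hiS, mul_comm ((p i : ℝ)) _,
            Real.sqrt_mul hDnonneg, hab, ha0, zero_add]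
          linear_combination b * hs2
        have := hNM (insert i S) ⟨i, Finset.mem_insert_self i S⟩
          (fun j hj => by
            rcases Finset.mem_insert.1 hj with h | h
            · subst h; exact ⟨le_refl _, hikk⟩
            · exact hSk' j h)
        apply this
        rw [hkey]
        exact hG.mul _ _ hb hpiF
      · have hab2 : (2:ℝ) * a * b ≠ 0 := by
          intro h; rcases mul_eq_zero.1 h with h1 | h1
          · rcases mul_eq_zero.1 h1 with h2 | h2
            · norm_num at h2
            · exact ha0 h2
          · exact hb0 h1
        have hsq : (∏ j ∈ S, (p j : ℝ)) =
            (a + b * Real.sqrt (p i)) * (a + b * Real.sqrt (p i)) := by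
          rw [← hab, Real.mul_self_sqrt hDnonneg]
        have hkey : Real.sqrt (p i) =
            (2 * a * b)⁻¹ * ((∏ j ∈ S, (p j : ℝ)) - a * a - b * b * (p i)) := by
          rw [inv_mul_eq_div, eq_div_iff hab2]
          linear_combination -hsq - (b*b) * hs2
        apply hsnot
        rw [hkey]
        apply hG.mul _ _ (hG.inv _ (hG.mul _ _ (hG.mul _ _ (hG.natCast 2) ha) hb))
        exact hG.sub _ _ (hG.sub _ _ hDrat (hG.mul _ _ ha ha))
          (hG.mul _ _ (hG.mul _ _ hb hb) hpiF)
lemma Kset_mono (p : ℕ → ℕ) (k : ℕ) (hp : ∀ i < k, (p i).Prime)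
    (hinj : ∀ i < k, ∀ j < k, p i = p j → i = j) {i : ℕ} (hi : i + 1 ≤ k) :
    Kset p i ⊆ Kset p (i+1) := by
  intro x hx
  exact ⟨x, hx, 0, (main p k hp hinj i (by omega)).1.zero, by ring⟩

lemma sqrt_mem (p : ℕ → ℕ) (k : ℕ) (hp : ∀ i < k, (p i).Prime)
    (hinj : ∀ i < k, ∀ j < k, p i = p j → i = j) :
    ∀ i, i ≤ k → ∀ j, j < i → Real.sqrt (p j) ∈ Kset p i := by
  intro i
  induction i with
  | zero => intro _ j hj; omega
  | succ i ih =>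
    intro hik j hj
    rcases Nat.lt_succ_iff_lt_or_eq.1 hj with h | h
    · exact Kset_mono p k hp hinj hik (ih (by omega) j h)
    · subst h
      refine ⟨0, (main p k hp hinj j (by omega)).1.zero, 1,
        (by simpa using (main p k hp hinj j (by omega)).1.natCast 1), by ring⟩

lemma sqrtprod_mem (p : ℕ → ℕ) (k : ℕ) (hp : ∀ i < k, (p i).Prime)
    (hinj : ∀ i < k, ∀ j < k, p i = p j → i = j) {i : ℕ} (hi : i ≤ k)
    {S : Finset ℕ} (hS : S ⊆ Finset.range i) :
    Real.sqrt (∏ j ∈ S, (p j : ℝ)) ∈ Kset p i := by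
  have hG := (main p k hp hinj i hi).1
  rw [sqrt_prod _ (fun j _ => Nat.cast_nonneg _)]
  apply Finset.prod_induction _ (fun x => x ∈ Kset p i) (fun a b ha hb => hG.mul _ _ ha hb)
    (by simpa using hG.natCast 1)
  intro j hj
  exact sqrt_mem p k hp hinj i hi j (Finset.mem_range.1 (hS hj))

lemma sum_mem_Kset (p : ℕ → ℕ) (k : ℕ) (hp : ∀ i < k, (p i).Prime)
    (hinj : ∀ i < k, ∀ j < k, p i = p j → i = j) {i : ℕ} (hi : i ≤ k)
    (c : Finset ℕ → ℚ) (P : Finset (Finset ℕ)) (hP : ∀ S ∈ P, S ⊆ Finset.range i) :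
    (∑ S ∈ P, (c S : ℝ) * Real.sqrt (∏ j ∈ S, (p j : ℝ))) ∈ Kset p i := by
  have hG := (main p k hp hinj i hi).1
  apply Finset.sum_induction _ (fun x => x ∈ Kset p i) (fun a b ha hb => hG.add _ _ ha hb)
    hG.zero
  intro S hS
  exact hG.mul _ _ (hG.rat _) (sqrtprod_mem p k hp hinj hi (hP S hS))

theorem linind (p : ℕ → ℕ) (k : ℕ) (hp : ∀ i < k, (p i).Prime)
    (hinj : ∀ i < k, ∀ j < k, p i = p j → i = j) :
    ∀ i, i ≤ k → ∀ c : Finset ℕ → ℚ,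
      (∑ S ∈ (Finset.range i).powerset, (c S : ℝ) * Real.sqrt (∏ j ∈ S, (p j : ℝ))) = 0 →
      ∀ S ∈ (Finset.range i).powerset, c S = 0 := by
  intro i
  induction i with
  | zero =>
    intro _ c hc S hS
    simp only [Finset.range_zero, Finset.powerset_empty, Finset.sum_singleton,
      Finset.prod_empty, Real.sqrt_one, mul_one] at hc
    simp only [Finset.range_zero, Finset.powerset_empty, Finset.mem_singleton] at hS
    subst hS
    exact_mod_cast hc
  | succ i ih =>
    intro hik c hc S hS
    have hik' : i ≤ k := by omega
    have hinotin : i ∉ Finset.range i := by simp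
    have hps : (Finset.range (i+1)).powerset =
        (Finset.range i).powerset ∪ (Finset.range i).powerset.image (insert i) := by
      rw [Finset.range_add_one, Finset.powerset_insert]
    have hdisj : Disjoint (Finset.range i).powerset
        ((Finset.range i).powerset.image (insert i)) := by
      rw [Finset.disjoint_left]
      intro T hT hT2
      obtain ⟨U, hU, hUe⟩ := Finset.mem_image.1 hT2
      have : i ∈ T := by rw [← hUe]; exact Finset.mem_insert_self i U
      exact hinotin (Finset.mem_powerset.1 hT this)
    have hinj_ins : Set.InjOn (insert i) ((Finset.range i).powerset : Set (Finset ℕ)) := by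
      intro T hT U hU he
      have hiT : i ∉ T := fun h => hinotin (Finset.mem_powerset.1 (by exact_mod_cast hT) h)
      have hiU : i ∉ U := fun h => hinotin (Finset.mem_powerset.1 (by exact_mod_cast hU) h)
      rw [← Finset.erase_insert hiT, ← Finset.erase_insert hiU, he]
    rw [hps, Finset.sum_union hdisj, Finset.sum_image hinj_ins] at hc
    have himg : ∀ T ∈ (Finset.range i).powerset,
        (c (insert i T) : ℝ) * Real.sqrt (∏ j ∈ insert i T, (p j : ℝ)) =
        ((c (insert i T) : ℝ) * Real.sqrt (∏ j ∈ T, (p j : ℝ))) * Real.sqrt (p i) := by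
      intro T hT
      have hiT : i ∉ T := fun h => hinotin (Finset.mem_powerset.1 hT h)
      rw [Finset.prod_insert hiT, mul_comm ((p i : ℝ)) _,
        Real.sqrt_mul (Finset.prod_nonneg (fun j _ => Nat.cast_nonneg _))]
      ring
    rw [Finset.sum_congr rfl himg, ← Finset.sum_mul] at hc
    set A : ℝ := ∑ S ∈ (Finset.range i).powerset, (c S : ℝ) * Real.sqrt (∏ j ∈ S, (p j : ℝ))
      with hA
    set B : ℝ := ∑ T ∈ (Finset.range i).powerset,
      (c (insert i T) : ℝ) * Real.sqrt (∏ j ∈ T, (p j : ℝ)) with hB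
    have hAmem : A ∈ Kset p i := sum_mem_Kset p k hp hinj hik' c _
      (fun S hS => Finset.mem_powerset.1 hS)
    have hBmem : B ∈ Kset p i := sum_mem_Kset p k hp hinj hik' _ _
      (fun S hS => Finset.mem_powerset.1 hS)
    have hG := (main p k hp hinj i hik').1
    have hsnot := (main p k hp hinj i hik').2 ({i} : Finset ℕ)
      ⟨i, Finset.mem_singleton_self i⟩
      (by intro j hj; rw [Finset.mem_singleton] at hj; subst hj; exact ⟨le_refl _, by omega⟩)
    have hsnot' : Real.sqrt (p i) ∉ Kset p i := by
      simpa [Finset.prod_singleton] using hsnot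
    have hB0 : B = 0 := by
      by_contra hB0
      apply hsnot'
      have hv : Real.sqrt (p i) = B⁻¹ * (-A) := by
        rw [inv_mul_eq_div, eq_div_iff hB0]
        linear_combination hc
      rw [hv]
      exact hG.mul _ _ (hG.inv _ hBmem) (hG.neg _ hAmem)
    have hA0 : A = 0 := by rw [hB0] at hc; linarith [hc]
    -- apply IH to both
    have h1 := ih hik' c hA0
    have h2 := ih hik' (fun T => c (insert i T)) (by rw [← hB]; exact hB0)
    rw [hps, Finset.mem_union] at hS
    rcases hS with h | h
    · exact h1 S h
    · obtain ⟨T, hT, rfl⟩ := Finset.mem_image.1 h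
      exact h2 T hT
-- expansion of any MvPolynomial evaluated at square roots into multilinear combination
lemma expand_multilinear (k : ℕ) (v : Fin k → ℚ) (f : MvPolynomial (Fin k) ℚ) :
    ∃ c : Finset (Fin k) → ℚ, ∀ ε : Fin k → ℝ, (∀ i, ε i * ε i = (v i : ℝ)) →
      MvPolynomial.aeval ε f = ∑ S : Finset (Fin k), (c S : ℝ) * ∏ i ∈ S, ε i := by
  induction f using MvPolynomial.induction_on with
  | C a =>
    refine ⟨fun S => if S = ∅ then a else 0, fun ε hε => ?_⟩
    rw [MvPolynomial.aeval_C]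
    rw [Finset.sum_eq_single ∅]
    · simp
    · intro b _ hb; simp [hb]
    · intro h; simp at h
  | add f g hf hg =>
    obtain ⟨cf, hcf⟩ := hf
    obtain ⟨cg, hcg⟩ := hg
    refine ⟨cf + cg, fun ε hε => ?_⟩
    rw [map_add, hcf ε hε, hcg ε hε, ← Finset.sum_add_distrib]
    apply Finset.sum_congr rfl
    intro S _
    simp only [Pi.add_apply]
    push_cast
    ring
  | mul_X f i hf =>
    obtain ⟨cf, hcf⟩ := hf
    refine ⟨fun S => if i ∈ S then cf (S.erase i) else v i * cf (insert i S), fun ε hε => ?_⟩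
    rw [map_mul, MvPolynomial.aeval_X, hcf ε hε, Finset.sum_mul]
    apply Finset.sum_nbij'
      (i := fun S => if i ∈ S then S.erase i else insert i S)
      (j := fun S => if i ∈ S then S.erase i else insert i S)
    · intro S _; exact Finset.mem_univ _
    · intro S _; exact Finset.mem_univ _
    · intro S _
      by_cases hiS : i ∈ S
      · simp only [hiS, if_true]
        rw [if_neg (fun h => (Finset.mem_erase.1 h).1 rfl), Finset.insert_erase hiS]
      · rw [if_neg hiS, if_pos (Finset.mem_insert_self i S), Finset.erase_insert hiS]
    · intro S _
      by_cases hiS : i ∈ S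
      · simp only [hiS, if_true]
        rw [if_neg (fun h => (Finset.mem_erase.1 h).1 rfl), Finset.insert_erase hiS]
      · rw [if_neg hiS, if_pos (Finset.mem_insert_self i S), Finset.erase_insert hiS]
    · intro S _
      beta_reduce
      by_cases hiS : i ∈ S
      · rw [if_pos hiS, if_neg (fun h => (Finset.mem_erase.1 h).1 rfl),
          Finset.insert_erase hiS]
        have hprod : ∏ j ∈ S, ε j = ε i * ∏ j ∈ S.erase i, ε j :=
          (Finset.mul_prod_erase S ε hiS).symm
        rw [hprod]
        push_cast
        linear_combination ((cf S : ℝ) * ∏ j ∈ S.erase i, ε j) * hε i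
      · rw [if_neg hiS, if_pos (Finset.mem_insert_self i S), Finset.erase_insert hiS,
          Finset.prod_insert hiS]
        ring
lemma attachFin_image_val {k : ℕ} (S : Finset (Fin k)) (h : ∀ m ∈ Finset.image Fin.val S, m < k) :
    (Finset.image Fin.val S).attachFin h = S := by
  ext i
  rw [Finset.mem_attachFin]
  constructor
  · intro hi
    obtain ⟨j, hj, hje⟩ := Finset.mem_image.1 hi
    rwa [Fin.val_injective hje] at hj
  · intro hi
    exact Finset.mem_image_of_mem _ hi

lemma conj_roots (p : ℕ → ℕ) (k : ℕ) (hp : ∀ i < k, (p i).Prime)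
    (hinj : ∀ i < k, ∀ j < k, p i = p j → i = j)
    (q : Polynomial ℤ)
    (hq : Polynomial.aeval (∑ i : Fin k, Real.sqrt (p i)) q = 0) :
    ∀ ε : Fin k → ℝ, (∀ i, ε i * ε i = ((p i : ℕ) : ℝ)) →
      Polynomial.aeval (∑ i : Fin k, ε i) q = 0 := by
  set F : MvPolynomial (Fin k) ℚ :=
    Polynomial.aeval (∑ i : Fin k, MvPolynomial.X i) q with hF
  have hFeval : ∀ ε : Fin k → ℝ,
      MvPolynomial.aeval ε F = Polynomial.aeval (∑ i : Fin k, ε i) q := by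
    intro ε
    rw [hF]
    have key := Polynomial.aeval_algHom_apply
      ((MvPolynomial.aeval ε : MvPolynomial (Fin k) ℚ →ₐ[ℚ] ℝ).restrictScalars ℤ)
      (∑ i : Fin k, MvPolynomial.X i) q
    simp only [AlgHom.coe_restrictScalars', map_sum, MvPolynomial.aeval_X] at key
    exact key.symm
  obtain ⟨c, hc⟩ := expand_multilinear k (fun i => ((p i : ℕ) : ℚ)) F
  have hε0 : ∀ i : Fin k, Real.sqrt (p i) * Real.sqrt (p i) = (((fun i : Fin k => ((p i : ℕ) : ℚ)) i : ℚ) : ℝ) := by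
    intro i
    rw [Real.mul_self_sqrt (Nat.cast_nonneg _)]
    push_cast
    rfl
  have h0 : ∑ S : Finset (Fin k), (c S : ℝ) * ∏ i ∈ S, Real.sqrt (p i) = 0 := by
    rw [← hc (fun i => Real.sqrt (p i)) hε0, hFeval]
    exact hq
  -- transfer to ℕ-indexed linear independence
  set cc : Finset ℕ → ℚ := fun T =>
    if h : T ⊆ Finset.range k then c (T.attachFin (fun m hm => Finset.mem_range.1 (h hm)))
    else 0 with hcc
  have hterm : ∀ S : Finset (Fin k),
      (cc (Finset.image Fin.val S) : ℝ) *
        Real.sqrt (∏ j ∈ Finset.image Fin.val S, (p j : ℝ)) =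
      (c S : ℝ) * ∏ i ∈ S, Real.sqrt (p i) := by
    intro S
    have hsub : Finset.image Fin.val S ⊆ Finset.range k := by
      intro m hm
      obtain ⟨i, _, rfl⟩ := Finset.mem_image.1 hm
      exact Finset.mem_range.2 i.isLt
    have h1 : cc (Finset.image Fin.val S) = c S := by
      rw [hcc]
      beta_reduce
      rw [dif_pos hsub, attachFin_image_val]
    rw [h1]
    congr 1
    rw [Finset.prod_image (fun a _ b _ h => Fin.val_injective h),
      sqrt_prod _ (fun j _ => Nat.cast_nonneg _)]
  have hsum : ∑ T ∈ (Finset.range k).powerset, (cc T : ℝ) * Real.sqrt (∏ j ∈ T, (p j : ℝ))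
      = ∑ S : Finset (Fin k), (c S : ℝ) * ∏ i ∈ S, Real.sqrt (p i) := by
    apply Finset.sum_nbij' (i := fun T => Finset.univ.filter (fun i : Fin k => (i : ℕ) ∈ T))
      (j := fun S => Finset.image Fin.val S)
    · intro T _; exact Finset.mem_univ _
    · intro S _
      rw [Finset.mem_powerset]
      intro m hm
      obtain ⟨i, _, rfl⟩ := Finset.mem_image.1 hm
      exact Finset.mem_range.2 i.isLt
    · intro T hT
      ext n
      rw [Finset.mem_powerset] at hT
      constructor
      · intro hn
        obtain ⟨i, hi, rfl⟩ := Finset.mem_image.1 hn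
        exact (Finset.mem_filter.1 hi).2
      · intro hn
        have hnk : n < k := Finset.mem_range.1 (hT hn)
        exact Finset.mem_image.2 ⟨⟨n, hnk⟩, Finset.mem_filter.2 ⟨Finset.mem_univ _, hn⟩, rfl⟩
    · intro S _
      ext i
      rw [Finset.mem_filter]
      constructor
      · rintro ⟨-, hi⟩
        obtain ⟨j, hj, hje⟩ := Finset.mem_image.1 hi
        rwa [Fin.val_injective hje] at hj
      · intro hi
        exact ⟨Finset.mem_univ _, Finset.mem_image_of_mem _ hi⟩
    · intro T hT
      rw [Finset.mem_powerset] at hT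
      -- term equality: term at T = term at filter...
      have himg : Finset.image Fin.val (Finset.univ.filter (fun i : Fin k => (i : ℕ) ∈ T)) = T := by
        ext n
        constructor
        · intro hn
          obtain ⟨i, hi, rfl⟩ := Finset.mem_image.1 hn
          exact (Finset.mem_filter.1 hi).2
        · intro hn
          have hnk : n < k := Finset.mem_range.1 (hT hn)
          exact Finset.mem_image.2 ⟨⟨n, hnk⟩, Finset.mem_filter.2 ⟨Finset.mem_univ _, hn⟩, rfl⟩
      calc (cc T : ℝ) * Real.sqrt (∏ j ∈ T, (p j : ℝ))
          = (cc (Finset.image Fin.val (Finset.univ.filter (fun i : Fin k => (i : ℕ) ∈ T))) : ℝ) *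
            Real.sqrt (∏ j ∈ Finset.image Fin.val
              (Finset.univ.filter (fun i : Fin k => (i : ℕ) ∈ T)), (p j : ℝ)) := by rw [himg]
        _ = _ := hterm _
  have hcc0 := linind p k hp hinj k le_rfl cc (by rw [hsum]; exact h0)
  have hc0 : ∀ S : Finset (Fin k), c S = 0 := by
    intro S
    have hsub : Finset.image Fin.val S ⊆ Finset.range k := by
      intro m hm
      obtain ⟨i, _, rfl⟩ := Finset.mem_image.1 hm
      exact Finset.mem_range.2 i.isLt
    have h2 := hcc0 (Finset.image Fin.val S) (Finset.mem_powerset.2 hsub)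
    rw [hcc] at h2
    beta_reduce at h2
    rw [dif_pos hsub, attachFin_image_val] at h2
    exact h2
  intro ε hε
  rw [← hFeval ε, hc ε (by intro i; rw [hε i]; push_cast; rfl)]
  apply Finset.sum_eq_zero
  intro S _
  rw [hc0 S]
  simp

lemma linind_single (p : ℕ → ℕ) (k : ℕ) (hp : ∀ i < k, (p i).Prime)
    (hinj : ∀ i < k, ∀ j < k, p i = p j → i = j)
    (g : ℕ → ℚ) (hg : ∑ j ∈ Finset.range k, (g j : ℝ) * Real.sqrt (p j) = 0) :
    ∀ j < k, g j = 0 := by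
  intro j hj
  set c : Finset ℕ → ℚ := fun T => if T.card = 1 then g (T.sum id) else 0 with hc
  have hcsingle : ∀ a : ℕ, c {a} = g a := by
    intro a
    rw [hc]
    simp
  have hmain : ∑ T ∈ (Finset.range k).powerset, (c T : ℝ) * Real.sqrt (∏ j ∈ T, (p j : ℝ)) = 0 := by
    rw [← Finset.sum_subset (s₁ := (Finset.range k).image (fun a => ({a} : Finset ℕ)))
      (by intro T hT
          obtain ⟨a, ha, rfl⟩ := Finset.mem_image.1 hT
          rw [Finset.mem_powerset]
          intro m hm
          rwa [Finset.mem_singleton.1 hm]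
      )
      (by intro T hT hTn
          have hcT : c T = 0 := by
            rw [hc]
            by_cases h1 : T.card = 1
            · obtain ⟨a, rfl⟩ := Finset.card_eq_one.1 h1
              exfalso
              apply hTn
              apply Finset.mem_image.2
              refine ⟨a, ?_, rfl⟩
              rw [Finset.mem_powerset] at hT
              exact hT (Finset.mem_singleton_self a)
            · beta_reduce
              rw [if_neg h1]
          rw [hcT]
          simp)]
    rw [Finset.sum_image (by intro a _ b _ h; exact Finset.singleton_injective h)]
    rw [← hg]
    apply Finset.sum_congr rfl
    intro a _
    rw [hcsingle a, Finset.prod_singleton]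
  have := linind p k hp hinj k le_rfl c hmain ({j} : Finset ℕ)
    (Finset.mem_powerset.2 (by intro m hm; rw [Finset.mem_singleton.1 hm]; exact Finset.mem_range.2 hj))
  rwa [hcsingle j] at this
theorem degree_bound (k : ℕ) (pf : Fin k → ℕ) (hinjf : Function.Injective pf)
    (hpf : ∀ i, (pf i).Prime) (q : Polynomial ℤ) (hq0 : q ≠ 0)
    (hq : Polynomial.aeval (∑ i, Real.sqrt (pf i)) q = 0) : 2 ^ k ≤ q.natDegree := by
  classical
  set p : ℕ → ℕ := fun n => if h : n < k then pf ⟨n, h⟩ else 0 with hpdef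
  have hpe : ∀ i : Fin k, p i.val = pf i := by
    intro i
    rw [hpdef]
    beta_reduce
    rw [dif_pos i.isLt]
  have hp : ∀ i < k, (p i).Prime := by
    intro i hi
    rw [hpdef]
    beta_reduce
    rw [dif_pos hi]
    exact hpf _
  have hinj : ∀ i < k, ∀ j < k, p i = p j → i = j := by
    intro i hi j hj he
    rw [hpdef] at he
    beta_reduce at he
    rw [dif_pos hi, dif_pos hj] at he
    have h2 := hinjf he
    exact congrArg Fin.val h2
  have hq' : Polynomial.aeval (∑ i : Fin k, Real.sqrt (p i)) q = 0 := by
    have : (∑ i : Fin k, Real.sqrt (p i)) = ∑ i, Real.sqrt (pf i) := by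
      apply Finset.sum_congr rfl
      intro i _
      rw [hpe i]
    rw [this]
    exact hq
  -- the 2^k conjugate values
  set r : (Fin k → Bool) → ℝ :=
    fun s => ∑ i : Fin k, (if s i then (1:ℝ) else -1) * Real.sqrt (p i) with hr
  have hroot : ∀ s, Polynomial.aeval (r s) q = 0 := by
    intro s
    apply conj_roots p k hp hinj q hq'
    intro i
    by_cases hsi : s i = true
    · rw [if_pos hsi]
      rw [one_mul]
      exact Real.mul_self_sqrt (Nat.cast_nonneg _)
    · rw [if_neg hsi]
      linear_combination Real.mul_self_sqrt (Nat.cast_nonneg ((p i : ℕ)))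
  have hrinj : Function.Injective r := by
    intro s t hst
    set g : ℕ → ℚ := fun n =>
      if h : n < k then ((if s ⟨n, h⟩ then (1:ℚ) else -1) - (if t ⟨n, h⟩ then 1 else -1))
      else 0 with hg
    have hge : ∀ i : Fin k, (g i.val : ℝ) =
        ((if s i then (1:ℝ) else -1) - (if t i then 1 else -1)) := by
      intro i
      rw [hg]
      beta_reduce
      rw [dif_pos i.isLt]
      push_cast
      congr 1 <;> · rw [Fin.eta]; split <;> norm_num
    have hgsum : ∑ j ∈ Finset.range k, (g j : ℝ) * Real.sqrt (p j) = 0 := by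
      rw [← Fin.sum_univ_eq_sum_range (fun j => (g j : ℝ) * Real.sqrt (p j)) k]
      have : ∀ i : Fin k, (g i.val : ℝ) * Real.sqrt (p i.val) =
          (if s i then (1:ℝ) else -1) * Real.sqrt (p i) -
          (if t i then (1:ℝ) else -1) * Real.sqrt (p i) := by
        intro i
        rw [hge i]
        ring
      rw [Finset.sum_congr rfl (fun i _ => this i), Finset.sum_sub_distrib]
      show r s - r t = 0
      rw [hst]
      ring
    have hg0 := linind_single p k hp hinj g hgsum
    funext i
    have := hg0 i.val i.isLt
    rw [hg] at this
    beta_reduce at this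
    rw [dif_pos i.isLt] at this
    rw [Fin.eta] at this
    by_cases hsi : s i = true <;> by_cases hti : t i = true
    · rw [hsi, hti]
    · rw [if_pos hsi, if_neg hti] at this; norm_num at this
    · rw [if_neg hsi, if_pos hti] at this; norm_num at this
    · rw [Bool.not_eq_true] at hsi hti; rw [hsi, hti]
  -- count roots
  set qR : Polynomial ℝ := q.map (Int.castRingHom ℝ) with hqR
  have hqR0 : qR ≠ 0 := (Polynomial.map_ne_zero_iff (Int.cast_injective)).2 hq0
  have hmem : ∀ s : Fin k → Bool, r s ∈ qR.roots.toFinset := by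
    intro s
    rw [Multiset.mem_toFinset, Polynomial.mem_roots hqR0]
    rw [hqR, Polynomial.IsRoot, Polynomial.eval_map, ← algebraMap_int_eq,
      ← Polynomial.aeval_def]
    exact hroot s
  have hsub : Finset.image r Finset.univ ⊆ qR.roots.toFinset := by
    intro x hx
    obtain ⟨s, _, rfl⟩ := Finset.mem_image.1 hx
    exact hmem s
  have hcard : (Finset.image r Finset.univ).card = 2 ^ k := by
    rw [Finset.card_image_of_injective _ hrinj, Finset.card_univ]
    simp
  calc 2 ^ k = (Finset.image r Finset.univ).card := hcard.symm
    _ ≤ qR.roots.toFinset.card := Finset.card_le_card hsub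
    _ ≤ Multiset.card qR.roots := Multiset.toFinset_card_le _
    _ ≤ qR.natDegree := Polynomial.card_roots' qR
    _ ≤ q.natDegree := Polynomial.natDegree_map_le

end USSR18


theorem ussr_stmt_18 :
    ∃ C : ℝ, 0 < C ∧
      (∀ k : ℕ, 1 ≤ k → ∃ p : Fin k → ℕ, Function.Injective p ∧ (∀ i, (p i).Prime) ∧
        ∀ i, (p i : ℝ) ≤ C * k * Real.log (k + 2)) ∧
      ∀ k : ℕ, 1 ≤ k → ∀ p : Fin k → ℕ, Function.Injective p → (∀ i, (p i).Prime) →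
        (∀ i, (p i : ℝ) ≤ C * k * Real.log (k + 2)) →
        ∀ q : Polynomial ℤ, q ≠ 0 →
          Polynomial.aeval (∑ i, Real.sqrt (p i)) q = 0 → 2 ^ k ≤ q.natDegree := by
  refine ⟨150, by norm_num, ?_, ?_⟩
  · intro k hk
    exact USSR18.exists_primes k hk
  · intro k _ p hinj hp _ q hq0 hq
    exact USSR18.degree_bound k p hinj hp q hq0 hq
end
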